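/- Let ĥ > 0, w ≥ 1/(ĥ·√(ĥ² + 2)), m ≥ 0, and let c₁, c₂, c₃ be real numbers with |c_r| ≤ m for r = 1, 2, 3. Define the 3×3 complex Hermitian matrices A¹ = i·[[0,−1,0],[1,0,0],[0,0,0]], A² = i·[[0,0,0],[0,0,−1],[0,1,0]], A³ = i·[[0,0,−1],[0,0,0],[1,0,0]], and R¹ = [[1+ĥ²,−1,0],[−1,1+ĥ²,0],[0,0,0]], R² = [[0,0,0],[0,1+ĥ²,−1],[0,−1,1+ĥ²]], R³ = [[1+ĥ²,0,−1],[0,0,0],[−1,0,1+ĥ²]]. Then ±(c₁A¹ + c₂A² + c₃A³) ≼ m·w·(R¹ + R² + R³) = m·w·[[2(1+ĥ²),−1,−1],[−1,2(1+ĥ²),−1],[−1,−1,2(1+ĥ²)]] in the Loewner order. -/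

import Mathlib

open Matrix
open scoped ComplexOrder

/-- The elementary skew-Hermitian `3 × 3` matrices appearing in the proof of Theorem 5.3. -/
noncomputable def elIm1 : Matrix (Fin 3) (Fin 3) ℂ := Complex.I • !![0, -1, 0; 1, 0, 0; 0, 0, 0]
noncomputable def elIm2 : Matrix (Fin 3) (Fin 3) ℂ := Complex.I • !![0, 0, 0; 0, 0, -1; 0, 1, 0]
noncomputable def elIm3 : Matrix (Fin 3) (Fin 3) ℂ := Complex.I • !![0, 0, -1; 0, 0, 0; 1, 0, 0]

/-- The stiffness-like elementary `3 × 3` matrices appearing in the proof of Theorem 5.3,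
depending on the parameter `t` (playing the role of `ĥ`). -/
noncomputable def elR1 (t : ℝ) : Matrix (Fin 3) (Fin 3) ℂ :=
  !![1 + (t : ℂ) ^ 2, -1, 0; -1, 1 + (t : ℂ) ^ 2, 0; 0, 0, 0]
noncomputable def elR2 (t : ℝ) : Matrix (Fin 3) (Fin 3) ℂ :=
  !![0, 0, 0; 0, 1 + (t : ℂ) ^ 2, -1; 0, -1, 1 + (t : ℂ) ^ 2]
noncomputable def elR3 (t : ℝ) : Matrix (Fin 3) (Fin 3) ℂ :=
  !![1 + (t : ℂ) ^ 2, 0, -1; 0, 0, 0; -1, 0, 1 + (t : ℂ) ^ 2]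

lemma real_key (a br bi p q r s : ℝ) (ha : 0 ≤ a) (hab : br^2 + bi^2 ≤ a^2) :
    0 ≤ a*(p^2+q^2+r^2+s^2) + 2*(br*(p*r+q*s) - bi*(p*s-q*r)) := by
  set u := p*r+q*s with hu
  set v := p*s-q*r with hv
  have hN : (0:ℝ) ≤ p^2+q^2+r^2+s^2 := by positivity
  have hc : (br*u - bi*v)^2 ≤ (br^2+bi^2)*(u^2+v^2) := by nlinarith [sq_nonneg (br*v + bi*u)]
  have huv : u^2+v^2 = (p^2+q^2)*(r^2+s^2) := by rw [hu, hv]; ring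
  have h4 : (br^2+bi^2)*(u^2+v^2) ≤ a^2 * ((p^2+q^2+r^2+s^2)/2)^2 := by
    rw [huv]
    have h5 : (p^2+q^2)*(r^2+s^2) ≤ ((p^2+q^2+r^2+s^2)/2)^2 := by
      nlinarith [sq_nonneg (p^2+q^2-r^2-s^2)]
    nlinarith [mul_nonneg (by positivity : (0:ℝ) ≤ p^2+q^2) (by positivity : (0:ℝ) ≤ r^2+s^2),
      sq_nonneg a]
  have hsq : (br*u - bi*v)^2 ≤ (a * ((p^2+q^2+r^2+s^2)/2))^2 := by
    calc (br*u - bi*v)^2 ≤ (br^2+bi^2)*(u^2+v^2) := hc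
    _ ≤ a^2 * ((p^2+q^2+r^2+s^2)/2)^2 := h4
    _ = (a * ((p^2+q^2+r^2+s^2)/2))^2 := by ring
  have haN : 0 ≤ a * ((p^2+q^2+r^2+s^2)/2) := by positivity
  nlinarith [hsq, haN]

lemma psd_aux1 (a : ℝ) (b : ℂ) (ha : 0 ≤ a) (hab : b.re^2 + b.im^2 ≤ a^2) :
    (!![(a:ℂ), b, 0; starRingEnd ℂ b, a, 0; 0, 0, 0] : Matrix (Fin 3) (Fin 3) ℂ).PosSemidef := by
  rw [Matrix.posSemidef_iff_dotProduct_mulVec]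
  constructor
  · rw [Matrix.IsHermitian]
    ext i j
    fin_cases i <;> fin_cases j <;>
      simp [Matrix.conjTranspose_apply, Complex.conj_ofReal, Matrix.vecHead, Matrix.vecTail]
  · intro x
    have h : star x ⬝ᵥ (!![(a:ℂ), b, 0; starRingEnd ℂ b, a, 0; 0, 0, 0] : Matrix (Fin 3) (Fin 3) ℂ) *ᵥ x =
        (a:ℂ) * (starRingEnd ℂ (x 0) * x 0) + b * (starRingEnd ℂ (x 0) * x 1)
        + starRingEnd ℂ b * (starRingEnd ℂ (x 1) * x 0) + (a:ℂ) * (starRingEnd ℂ (x 1) * x 1) := by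
      simp [dotProduct, Matrix.mulVec, Fin.sum_univ_three]
      ring
    rw [h, Complex.le_def]
    constructor
    · simp only [Complex.add_re, Complex.mul_re, Complex.zero_re, Complex.ofReal_re,
        Complex.ofReal_im, Complex.conj_re, Complex.conj_im, Complex.mul_im]
      have := real_key a b.re b.im (x 0).re (x 0).im (x 1).re (x 1).im ha hab
      linarith [this]
    · simp [Complex.add_im, Complex.mul_im, Complex.mul_re, Complex.conj_re, Complex.conj_im]
      ring

lemma psd_aux2 (a : ℝ) (b : ℂ) (ha : 0 ≤ a) (hab : b.re^2 + b.im^2 ≤ a^2) :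
    (!![0, 0, 0; 0, (a:ℂ), b; 0, starRingEnd ℂ b, a] : Matrix (Fin 3) (Fin 3) ℂ).PosSemidef := by
  rw [Matrix.posSemidef_iff_dotProduct_mulVec]
  constructor
  · rw [Matrix.IsHermitian]
    ext i j
    fin_cases i <;> fin_cases j <;>
      simp [Matrix.conjTranspose_apply, Complex.conj_ofReal, Matrix.vecHead, Matrix.vecTail]
  · intro x
    have h : star x ⬝ᵥ (!![0, 0, 0; 0, (a:ℂ), b; 0, starRingEnd ℂ b, a] : Matrix (Fin 3) (Fin 3) ℂ) *ᵥ x =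
        (a:ℂ) * (starRingEnd ℂ (x 1) * x 1) + b * (starRingEnd ℂ (x 1) * x 2)
        + starRingEnd ℂ b * (starRingEnd ℂ (x 2) * x 1) + (a:ℂ) * (starRingEnd ℂ (x 2) * x 2) := by
      simp [dotProduct, Matrix.mulVec, Fin.sum_univ_three]
      ring
    rw [h, Complex.le_def]
    constructor
    · simp only [Complex.add_re, Complex.mul_re, Complex.zero_re, Complex.ofReal_re,
        Complex.ofReal_im, Complex.conj_re, Complex.conj_im, Complex.mul_im]
      have := real_key a b.re b.im (x 1).re (x 1).im (x 2).re (x 2).im ha hab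
      linarith [this]
    · simp [Complex.add_im, Complex.mul_im, Complex.mul_re, Complex.conj_re, Complex.conj_im]
      ring

lemma psd_aux3 (a : ℝ) (b : ℂ) (ha : 0 ≤ a) (hab : b.re^2 + b.im^2 ≤ a^2) :
    (!![(a:ℂ), 0, b; 0, 0, 0; starRingEnd ℂ b, 0, a] : Matrix (Fin 3) (Fin 3) ℂ).PosSemidef := by
  rw [Matrix.posSemidef_iff_dotProduct_mulVec]
  constructor
  · rw [Matrix.IsHermitian]
    ext i j
    fin_cases i <;> fin_cases j <;>
      simp [Matrix.conjTranspose_apply, Complex.conj_ofReal, Matrix.vecHead, Matrix.vecTail]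
  · intro x
    have h : star x ⬝ᵥ (!![(a:ℂ), 0, b; 0, 0, 0; starRingEnd ℂ b, 0, a] : Matrix (Fin 3) (Fin 3) ℂ) *ᵥ x =
        (a:ℂ) * (starRingEnd ℂ (x 0) * x 0) + b * (starRingEnd ℂ (x 0) * x 2)
        + starRingEnd ℂ b * (starRingEnd ℂ (x 2) * x 0) + (a:ℂ) * (starRingEnd ℂ (x 2) * x 2) := by
      simp [dotProduct, Matrix.mulVec, Fin.sum_univ_three]
      ring
    rw [h, Complex.le_def]
    constructor
    · simp only [Complex.add_re, Complex.mul_re, Complex.zero_re, Complex.ofReal_re,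
        Complex.ofReal_im, Complex.conj_re, Complex.conj_im, Complex.mul_im]
      have := real_key a b.re b.im (x 0).re (x 0).im (x 2).re (x 2).im ha hab
      linarith [this]
    · simp [Complex.add_im, Complex.mul_im, Complex.mul_re, Complex.conj_re, Complex.conj_im]
      ring

lemma psd_add {A B : Matrix (Fin 3) (Fin 3) ℂ} (hA : A.PosSemidef) (hB : B.PosSemidef) :
    (A + B).PosSemidef := by
  refine Matrix.posSemidef_iff_dotProduct_mulVec.2 ⟨hA.1.add hB.1, fun x => ?_⟩
  rw [Matrix.add_mulVec, dotProduct_add]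
  exact add_nonneg ((Matrix.posSemidef_iff_dotProduct_mulVec.1 hA).2 x)
    ((Matrix.posSemidef_iff_dotProduct_mulVec.1 hB).2 x)

set_option maxHeartbeats 2000000 in
/-- Majorization of the imaginary part of the elementary finite element matrix
(proof of Theorem 5.3): if `t > 0`, `w ≥ 1/(t √(t² + 2))`, `m ≥ 0` and `|c_r| ≤ m` for
`r = 1, 2, 3`, then `±(c₁ A¹ + c₂ A² + c₃ A³) ≼ m w (R¹ + R² + R³)` in the Loewner order,
and `R¹ + R² + R³` is the matrix with diagonal entries `2(1 + t²)` and off-diagonal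
entries `-1`. -/
theorem stmt_14 (t w m c₁ c₂ c₃ : ℝ) (ht : 0 < t)
    (hw : 1 / (t * Real.sqrt (t ^ 2 + 2)) ≤ w) (hm : 0 ≤ m)
    (h1 : |c₁| ≤ m) (h2 : |c₂| ≤ m) (h3 : |c₃| ≤ m) :
    elR1 t + elR2 t + elR3 t =
      !![2 * (1 + (t : ℂ) ^ 2), -1, -1;
         -1, 2 * (1 + (t : ℂ) ^ 2), -1;
         -1, -1, 2 * (1 + (t : ℂ) ^ 2)] ∧
    (((m * w : ℝ) : ℂ) • (elR1 t + elR2 t + elR3 t) -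
      ((c₁ : ℂ) • elIm1 + (c₂ : ℂ) • elIm2 + (c₃ : ℂ) • elIm3)).PosSemidef ∧
    (((m * w : ℝ) : ℂ) • (elR1 t + elR2 t + elR3 t) +
      ((c₁ : ℂ) • elIm1 + (c₂ : ℂ) • elIm2 + (c₃ : ℂ) • elIm3)).PosSemidef := by
  have hs : 0 < Real.sqrt (t^2+2) := Real.sqrt_pos.mpr (by positivity)
  have hts : 0 < t * Real.sqrt (t^2+2) := mul_pos ht hs
  have hw1 : 1 ≤ w * (t * Real.sqrt (t^2+2)) := by
    rw [div_le_iff₀ hts] at hw; linarith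
  have hw0 : 0 ≤ w := le_trans (le_of_lt (by positivity)) hw
  have hss : Real.sqrt (t^2+2)^2 = t^2+2 := Real.sq_sqrt (by positivity)
  have hsq : 1 ≤ w^2 * (t^2*(t^2+2)) := by
    have h2 : 1*1 ≤ (w * (t * Real.sqrt (t^2+2))) * (w * (t * Real.sqrt (t^2+2))) :=
      mul_le_mul hw1 hw1 zero_le_one (le_trans zero_le_one hw1)
    nlinarith [h2, hss]
  have ha : 0 ≤ m*w*(1+t^2) := mul_nonneg (mul_nonneg hm hw0) (by positivity)
  have hkey : ∀ c : ℝ, |c| ≤ m → ((-(m*w):ℝ) + (c:ℂ)*Complex.I).re^2 +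
      ((-(m*w):ℝ) + (c:ℂ)*Complex.I).im^2 ≤ (m*w*(1+t^2))^2 := by
    intro c hc
    have hc2 : c^2 ≤ m^2 := by nlinarith [abs_nonneg c, sq_abs c, hc]
    have hmm : m^2 ≤ m^2 * (w^2 * (t^2*(t^2+2))) := by nlinarith [sq_nonneg m, hsq]
    simp only [Complex.add_re, Complex.add_im, Complex.ofReal_re, Complex.ofReal_im,
      Complex.mul_re, Complex.mul_im, Complex.I_re, Complex.I_im]
    nlinarith [hc2, hmm]
  have hp1 : ∀ c : ℝ, |c| ≤ m →
      (!![((m*w*(1+t^2):ℝ):ℂ), (-(m*w):ℝ) + (c:ℂ)*Complex.I, 0;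
          starRingEnd ℂ ((-(m*w):ℝ) + (c:ℂ)*Complex.I), ((m*w*(1+t^2):ℝ):ℂ), 0;
          0, 0, 0]).PosSemidef :=
    fun c hc => psd_aux1 (m*w*(1+t^2)) _ ha (hkey c hc)
  have hp2 : ∀ c : ℝ, |c| ≤ m →
      (!![0, 0, 0; 0, ((m*w*(1+t^2):ℝ):ℂ), (-(m*w):ℝ) + (c:ℂ)*Complex.I;
          0, starRingEnd ℂ ((-(m*w):ℝ) + (c:ℂ)*Complex.I), ((m*w*(1+t^2):ℝ):ℂ)]).PosSemidef :=
    fun c hc => psd_aux2 (m*w*(1+t^2)) _ ha (hkey c hc)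
  have hp3 : ∀ c : ℝ, |c| ≤ m →
      (!![((m*w*(1+t^2):ℝ):ℂ), 0, (-(m*w):ℝ) + (c:ℂ)*Complex.I; 0, 0, 0;
          starRingEnd ℂ ((-(m*w):ℝ) + (c:ℂ)*Complex.I), 0,
          ((m*w*(1+t^2):ℝ):ℂ)]).PosSemidef :=
    fun c hc => psd_aux3 (m*w*(1+t^2)) _ ha (hkey c hc)
  refine ⟨?_, ?_, ?_⟩
  · ext i j
    fin_cases i <;> fin_cases j <;>
      simp [elR1, elR2, elR3, Matrix.add_apply, Matrix.vecHead, Matrix.vecTail] <;> ring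
  · have hdec : (((m * w : ℝ) : ℂ) • (elR1 t + elR2 t + elR3 t) -
        ((c₁ : ℂ) • elIm1 + (c₂ : ℂ) • elIm2 + (c₃ : ℂ) • elIm3)) =
        !![((m*w*(1+t^2):ℝ):ℂ), (-(m*w):ℝ) + (c₁:ℂ)*Complex.I, 0;
           starRingEnd ℂ ((-(m*w):ℝ) + (c₁:ℂ)*Complex.I), ((m*w*(1+t^2):ℝ):ℂ), 0; 0, 0, 0] +
        !![0, 0, 0; 0, ((m*w*(1+t^2):ℝ):ℂ), (-(m*w):ℝ) + (c₂:ℂ)*Complex.I;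
           0, starRingEnd ℂ ((-(m*w):ℝ) + (c₂:ℂ)*Complex.I), ((m*w*(1+t^2):ℝ):ℂ)] +
        !![((m*w*(1+t^2):ℝ):ℂ), 0, (-(m*w):ℝ) + (c₃:ℂ)*Complex.I; 0, 0, 0;
           starRingEnd ℂ ((-(m*w):ℝ) + (c₃:ℂ)*Complex.I), 0, ((m*w*(1+t^2):ℝ):ℂ)] := by
      ext i j
      fin_cases i <;> fin_cases j <;>
        simp [elR1, elR2, elR3, elIm1, elIm2, elIm3, Matrix.add_apply, Matrix.sub_apply,
          Matrix.smul_apply, Matrix.vecHead, Matrix.vecTail, map_add,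
          Complex.conj_ofReal, Complex.conj_I] <;>
        ring
    rw [hdec]
    exact psd_add (psd_add (hp1 c₁ h1) (hp2 c₂ h2)) (hp3 c₃ h3)
  · have h1' : |(-c₁)| ≤ m := by rwa [abs_neg]
    have h2' : |(-c₂)| ≤ m := by rwa [abs_neg]
    have h3' : |(-c₃)| ≤ m := by rwa [abs_neg]
    have hdec : (((m * w : ℝ) : ℂ) • (elR1 t + elR2 t + elR3 t) +
        ((c₁ : ℂ) • elIm1 + (c₂ : ℂ) • elIm2 + (c₃ : ℂ) • elIm3)) =
        !![((m*w*(1+t^2):ℝ):ℂ), (-(m*w):ℝ) + ((-c₁:ℝ):ℂ)*Complex.I, 0;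
           starRingEnd ℂ ((-(m*w):ℝ) + ((-c₁:ℝ):ℂ)*Complex.I), ((m*w*(1+t^2):ℝ):ℂ), 0;
           0, 0, 0] +
        !![0, 0, 0; 0, ((m*w*(1+t^2):ℝ):ℂ), (-(m*w):ℝ) + ((-c₂:ℝ):ℂ)*Complex.I;
           0, starRingEnd ℂ ((-(m*w):ℝ) + ((-c₂:ℝ):ℂ)*Complex.I), ((m*w*(1+t^2):ℝ):ℂ)] +
        !![((m*w*(1+t^2):ℝ):ℂ), 0, (-(m*w):ℝ) + ((-c₃:ℝ):ℂ)*Complex.I; 0, 0, 0;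
           starRingEnd ℂ ((-(m*w):ℝ) + ((-c₃:ℝ):ℂ)*Complex.I), 0,
           ((m*w*(1+t^2):ℝ):ℂ)] := by
      ext i j
      fin_cases i <;> fin_cases j <;>
        simp [elR1, elR2, elR3, elIm1, elIm2, elIm3, Matrix.add_apply, Matrix.sub_apply,
          Matrix.smul_apply, Matrix.vecHead, Matrix.vecTail, map_add,
          Complex.conj_ofReal, Complex.conj_I] <;>
        ring
    rw [hdec]
    exact psd_add (psd_add (hp1 (-c₁) h1') (hp2 (-c₂) h2')) (hp3 (-c₃) h3')
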